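/- Let q ≥ 1 be an integer, τ = 1/q, and α ≤ β real numbers with β − α + 2τ < 2π. Let c_a (a ∈ ℤ) be the Fourier coefficients of h_{α,β,τ} regarded as a function on ℝ/2πℤ. Then Σ_{a=0}^{∞} |c_a| ≤ (1/π)·(9 + log q). -/

import Mathlib

open MeasureTheory

/-- The cubic `g(x) = -2x³ + 3x²`. -/
noncomputable def gcube (x : ℝ) : ℝ := -2 * x ^ 3 + 3 * x ^ 2

/-- The smoothed bump function `h_{α,β,τ}`. -/
noncomputable def hfun (α β τ : ℝ) (x : ℝ) : ℝ :=
  if x ≤ α - τ then 0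
  else if x ≤ α then gcube ((x - α + τ) / τ)
  else if x ≤ β then 1
  else if x ≤ β + τ then gcube ((β + τ - x) / τ)
  else 0

/-- The `2π`-periodization of `h_{α,β,τ}`, i.e. `h_{α,β,τ}` regarded as a function on
`ℝ/2πℤ`. -/
noncomputable def hper (α β τ : ℝ) (x : ℝ) : ℝ :=
  ∑' k : ℤ, hfun α β τ (x + 2 * Real.pi * k)

/-- The Fourier coefficients of `h_{α,β,τ}` regarded as a function on `ℝ/2πℤ`:
`c_a = (1/2π) ∫ over one period of the periodization of h(x) e^{-iax} dx`. -/
noncomputable def fourierC (α β τ : ℝ) (a : ℤ) : ℂ :=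
  (1 / (2 * Real.pi)) *
    ∫ x in (0 : ℝ)..(2 * Real.pi), (hper α β τ x : ℂ) * Complex.exp (-Complex.I * a * x)

/-- derivative of gcube -/
noncomputable def gd (t : ℝ) : ℝ := 6 * t - 6 * t ^ 2
/-- second derivative of gcube -/
noncomputable def gdd (t : ℝ) : ℝ := 6 - 12 * t

lemma gcube_zero : gcube 0 = 0 := by simp [gcube]
lemma gcube_one : gcube 1 = 1 := by norm_num [gcube]

lemma gcube_nonneg {u : ℝ} (h0 : 0 ≤ u) (h1 : u ≤ 1) : 0 ≤ gcube u := by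
  unfold gcube; nlinarith [sq_nonneg u]

lemma gcube_le_one {u : ℝ} (h0 : 0 ≤ u) (h1 : u ≤ 1) : gcube u ≤ 1 := by
  unfold gcube; nlinarith [sq_nonneg (1 - u)]

section hfun_lemmas

variable {α β τ x : ℝ}

lemma hfun_zero_left (h : x ≤ α - τ) : hfun α β τ x = 0 := if_pos h

lemma hfun_eq_rise (hτ : 0 < τ) (h1 : α - τ ≤ x) (h2 : x ≤ α) :
    hfun α β τ x = gcube ((x - α + τ) / τ) := by
  rcases eq_or_lt_of_le h1 with h | h
  · rw [hfun, if_pos h.symm.le, ← h]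
    have : (α - τ - α + τ) / τ = 0 := by rw [show α - τ - α + τ = 0 by ring, zero_div]
    rw [this, gcube_zero]
  · rw [hfun, if_neg (not_le.2 h), if_pos h2]

lemma hfun_eq_one (hτ : 0 < τ) (h1 : α ≤ x) (h2 : x ≤ β) : hfun α β τ x = 1 := by
  rcases eq_or_lt_of_le h1 with h | h
  · rw [hfun, if_neg (by rw [← h]; intro hc; linarith), if_pos (le_of_eq h.symm), ← h]
    rw [show (α - α + τ) / τ = 1 by field_simp; ring, gcube_one]
  · rw [hfun, if_neg (by intro hc; linarith), if_neg (not_le.2 h), if_pos h2]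

lemma hfun_eq_fall (hτ : 0 < τ) (hab : α ≤ β) (h1 : β ≤ x) (h2 : x ≤ β + τ) :
    hfun α β τ x = gcube ((β + τ - x) / τ) := by
  rcases eq_or_lt_of_le h1 with h | h
  · rw [← h, show (β + τ - β) / τ = 1 by field_simp; ring, gcube_one]
    exact hfun_eq_one hτ hab le_rfl
  · rw [hfun, if_neg (by intro hc; linarith), if_neg (by intro hc; linarith),
      if_neg (not_le.2 h), if_pos h2]

lemma hfun_zero_right (hτ : 0 < τ) (hab : α ≤ β) (h : β + τ ≤ x) : hfun α β τ x = 0 := by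
  rcases eq_or_lt_of_le h with h' | h'
  · rw [hfun_eq_fall hτ hab (by linarith) h'.symm.le, ← h']
    rw [show (β + τ - (β + τ)) / τ = 0 by rw [show β + τ - (β+τ) = 0 by ring, zero_div], gcube_zero]
  · rw [hfun, if_neg (by intro hc; linarith), if_neg (by intro hc; linarith),
      if_neg (by intro hc; linarith), if_neg (not_le.2 h')]

lemma hfun_nonneg (hτ : 0 < τ) : 0 ≤ hfun α β τ x := by
  unfold hfun
  split_ifs with h1 h2 h3 h4
  · norm_num
  · exact gcube_nonneg (div_nonneg (by push_neg at h1; linarith) hτ.le)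
      (by rw [div_le_one hτ]; linarith)
  · norm_num
  · exact gcube_nonneg (div_nonneg (by linarith) hτ.le)
      (by rw [div_le_one hτ]; push_neg at h3; linarith)
  · norm_num

lemma hfun_le_one (hτ : 0 < τ) : hfun α β τ x ≤ 1 := by
  unfold hfun
  split_ifs with h1 h2 h3 h4
  · norm_num
  · exact gcube_le_one (div_nonneg (by push_neg at h1; linarith) hτ.le)
      (by rw [div_le_one hτ]; linarith)
  · norm_num
  · exact gcube_le_one (div_nonneg (by linarith) hτ.le)
      (by rw [div_le_one hτ]; push_neg at h3; linarith)
  · norm_num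

lemma gcube_continuous : Continuous gcube := by
  unfold gcube; fun_prop

lemma hfun_continuous (hτ : 0 < τ) (hab : α ≤ β) : Continuous (hfun α β τ) := by
  unfold hfun
  have keyfr : ∀ c : ℝ, frontier {x : ℝ | x ≤ c} = {c} := fun c => frontier_Iic
  refine Continuous.if ?_ continuous_const (Continuous.if ?_ ?_ (Continuous.if ?_ continuous_const (Continuous.if ?_ ?_ continuous_const)))
  · intro a ha
    rw [keyfr] at ha
    rw [Set.mem_singleton_iff] at ha
    subst ha
    rw [if_pos (by linarith : α - τ ≤ α),
      show (α - τ - α + τ) / τ = 0 by rw [show α - τ - α + τ = 0 by ring, zero_div], gcube_zero]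
  · intro a ha
    rw [keyfr] at ha
    rw [Set.mem_singleton_iff] at ha
    rw [ha]
    rw [if_pos hab, show (α - α + τ) / τ = 1 by field_simp; ring, gcube_one]
  · exact gcube_continuous.comp (by fun_prop)
  · intro a ha
    rw [keyfr] at ha
    rw [Set.mem_singleton_iff] at ha
    rw [ha]
    rw [if_pos (by linarith : β ≤ β + τ), show (β + τ - β) / τ = 1 by field_simp; ring, gcube_one]
  · intro a ha
    rw [keyfr] at ha
    rw [Set.mem_singleton_iff] at ha
    rw [ha]
    rw [show (β + τ - (β + τ)) / τ = 0 by rw [show β + τ - (β+τ) = 0 by ring, zero_div], gcube_zero]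
  · exact gcube_continuous.comp (by fun_prop)

end hfun_lemmas
section fourier_eq

variable {α β τ : ℝ}

lemma fourierC_eq (hτ : 0 < τ) (hab : α ≤ β) (hlen : β - α + 2 * τ < 2 * Real.pi) (a : ℤ) :
    fourierC α β τ a = (1 / (2 * Real.pi)) *
      ∫ x in (α - τ)..(β + τ), (hfun α β τ x : ℂ) * Complex.exp (-Complex.I * a * x) := by
  have hπ : 0 < Real.pi := Real.pi_pos
  set T : ℝ := 2 * Real.pi with hT
  have hTpos : 0 < T := by positivity
  set k0 : ℤ := ⌊(α - τ) / T⌋ with hk0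
  have hc0le : T * k0 ≤ α - τ := by
    rw [mul_comm]
    rw [← le_div_iff₀ hTpos]
    exact Int.floor_le _
  have hc0gt : α - τ < T * k0 + T := by
    have h := Int.lt_floor_add_one ((α - τ) / T)
    rw [div_lt_iff₀ hTpos] at h
    calc α - τ < (↑k0 + 1) * T := h
    _ = T * k0 + T := by ring
  set G : ℝ → ℂ := fun x => (hfun α β τ x : ℂ) * Complex.exp (-Complex.I * a * x) with hG
  have hcont : Continuous G := by
    exact ((Complex.continuous_ofReal.comp (hfun_continuous hτ hab)).mul (by fun_prop))
  have hexp : ∀ (m : ℤ) (x : ℝ),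
      Complex.exp (-Complex.I * a * ((x + T * m : ℝ) : ℂ)) =
        Complex.exp (-Complex.I * a * (x : ℂ)) := by
    intro m x
    rw [show (-Complex.I * a * ((x + T * m : ℝ) : ℂ) : ℂ)
        = -Complex.I * a * (x : ℂ) + ((-(a * m) : ℤ) : ℂ) * (2 * (Real.pi : ℂ) * Complex.I) by
      push_cast [hT]; ring]
    rw [Complex.exp_add, Complex.exp_int_mul_two_pi_mul_I, mul_one]
  have hper_eq : ∀ x : ℝ, 0 ≤ x → x ≤ T →
      hper α β τ x = hfun α β τ (x + T * k0) + hfun α β τ (x + T * k0 + T) := by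
    intro x hx0 hxT
    have hvan : ∀ k : ℤ, k ∉ ({k0, k0 + 1} : Finset ℤ) →
        hfun α β τ (x + 2 * Real.pi * k) = 0 := by
      intro k hk
      simp only [Finset.mem_insert, Finset.mem_singleton] at hk
      push_neg at hk
      rcases lt_or_gt_of_ne hk.1 with h | h
      · apply hfun_zero_left
        have hk' : (k : ℝ) ≤ (k0 : ℝ) - 1 := by
          have : k ≤ k0 - 1 := by omega
          exact_mod_cast this
        have : T * (k : ℝ) ≤ T * ((k0 : ℝ) - 1) := by
          exact mul_le_mul_of_nonneg_left hk' hTpos.le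
        calc x + 2 * Real.pi * k = x + T * (k : ℝ) := by rw [hT]
        _ ≤ T + T * ((k0 : ℝ) - 1) := by linarith
        _ = T * k0 := by ring
        _ ≤ α - τ := hc0le
      · apply hfun_zero_right hτ hab
        have hk2 : k0 + 2 ≤ k := by omega
        have hk' : (k0 : ℝ) + 2 ≤ (k : ℝ) := by exact_mod_cast hk2
        have : T * ((k0 : ℝ) + 2) ≤ T * (k : ℝ) :=
          mul_le_mul_of_nonneg_left hk' hTpos.le
        have hβ : β + τ < T * k0 + 2 * T := by linarith
        calc β + τ ≤ T * ((k0:ℝ) + 2) := by linarith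
        _ ≤ T * (k : ℝ) := this
        _ ≤ x + 2 * Real.pi * k := by rw [← hT]; linarith
    rw [hper, tsum_eq_sum hvan, Finset.sum_insert (by simp), Finset.sum_singleton, hT]
    congr 1
    congr 1
    push_cast
    ring
  have key : (∫ x in (0:ℝ)..T, (hper α β τ x : ℂ) * Complex.exp (-Complex.I * a * x))
      = ∫ x in (α - τ)..(β + τ), G x := by
    have h1 : (∫ x in (0:ℝ)..T, (hper α β τ x : ℂ) * Complex.exp (-Complex.I * a * x))
        = ∫ x in (0:ℝ)..T, (G (x + T * k0) + G (x + T * k0 + T)) := by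
      apply intervalIntegral.integral_congr
      intro x hx
      rw [Set.uIcc_of_le hTpos.le] at hx
      obtain ⟨hx0, hxT⟩ := hx
      show (hper α β τ x : ℂ) * Complex.exp (-Complex.I * a * x)
        = G (x + T * k0) + G (x + T * k0 + T)
      rw [hper_eq x hx0 hxT]
      have e1 : G (x + T * k0) =
          (hfun α β τ (x + T * k0) : ℂ) * Complex.exp (-Complex.I * a * x) := by
        simp only [hG]; rw [hexp k0 x]
      have e2 : G (x + T * k0 + T) =
          (hfun α β τ (x + T * k0 + T) : ℂ) * Complex.exp (-Complex.I * a * x) := by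
        simp only [hG]
        rw [show x + T * (k0 : ℝ) + T = x + T * ((k0 + 1 : ℤ) : ℝ) by push_cast; ring]
        rw [hexp (k0 + 1) x]
      rw [e1, e2]
      push_cast
      ring
    have hint : ∀ (d : ℝ) (u v : ℝ), IntervalIntegrable (fun x => G (x + d)) volume u v :=
      fun d u v => (hcont.comp (by fun_prop)).intervalIntegrable u v
    have h2 : (∫ x in (0:ℝ)..T, (G (x + T * k0) + G (x + T * k0 + T)))
        = (∫ x in (0:ℝ)..T, G (x + T * k0)) + ∫ x in (0:ℝ)..T, G (x + (T * k0 + T)) := by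
      rw [← intervalIntegral.integral_add (hint (T * k0) 0 T) (hint (T * k0 + T) 0 T)]
      congr 1
      funext x
      rw [show x + T * k0 + T = x + (T * k0 + T) by ring]
    have h3 : (∫ x in (0:ℝ)..T, G (x + T * k0)) = ∫ x in (T * k0)..(T * k0 + T), G x := by
      rw [intervalIntegral.integral_comp_add_right G (T * k0), zero_add, add_comm T (T * k0)]
    have h4 : (∫ x in (0:ℝ)..T, G (x + (T * k0 + T)))
        = ∫ x in (T * k0 + T)..(T * k0 + T + T), G x := by
      rw [intervalIntegral.integral_comp_add_right G (T * k0 + T), zero_add,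
        add_comm T (T * k0 + T)]
    have h5 : (∫ x in (T * k0)..(T * k0 + T), G x) + (∫ x in (T * k0 + T)..(T * k0 + T + T), G x)
        = ∫ x in (T * k0)..(T * k0 + T + T), G x :=
      intervalIntegral.integral_add_adjacent_intervals
        (hcont.intervalIntegrable _ _) (hcont.intervalIntegrable _ _)
    have hord1 : T * k0 ≤ α - τ := hc0le
    have hord2 : α - τ ≤ β + τ := by linarith
    have hord3 : β + τ ≤ T * k0 + T + T := by linarith
    have hzero1 : (∫ x in (T * k0)..(α - τ), G x) = 0 := by
      rw [← intervalIntegral.integral_zero (a := T * k0) (b := α - τ) (μ := volume) (E := ℂ)]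
      apply intervalIntegral.integral_congr
      intro x hx
      rw [Set.uIcc_of_le hord1] at hx
      simp only [hG]
      rw [hfun_zero_left hx.2]
      simp
    have hzero2 : (∫ x in (β + τ)..(T * k0 + T + T), G x) = 0 := by
      rw [← intervalIntegral.integral_zero (a := β + τ) (b := T * k0 + T + T) (μ := volume) (E := ℂ)]
      apply intervalIntegral.integral_congr
      intro x hx
      rw [Set.uIcc_of_le hord3] at hx
      simp only [hG]
      rw [hfun_zero_right hτ hab hx.1]
      simp
    have h6 : (∫ x in (T * k0)..(T * k0 + T + T), G x) = ∫ x in (α - τ)..(β + τ), G x := by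
      rw [← intervalIntegral.integral_add_adjacent_intervals (a := T * k0) (b := α - τ)
        (c := T * k0 + T + T) (hcont.intervalIntegrable _ _) (hcont.intervalIntegrable _ _),
        ← intervalIntegral.integral_add_adjacent_intervals (a := α - τ) (b := β + τ)
        (c := T * k0 + T + T) (hcont.intervalIntegrable _ _) (hcont.intervalIntegrable _ _),
        hzero1, hzero2]
      ring
    rw [h1, h2, h3, h4, h5, h6]
  rw [fourierC, ← hT, key]

end fourier_eq
section calculus

noncomputable def Rint (τ : ℝ) (c : ℂ) : ℂ :=
  ∫ x in (0:ℝ)..τ, (gcube (x / τ) : ℂ) * Complex.exp (c * x)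

noncomputable def Jint (τ : ℝ) (c : ℂ) : ℂ :=
  ∫ x in (0:ℝ)..τ, ((gd (x / τ) / τ : ℝ) : ℂ) * Complex.exp (c * x)

noncomputable def Kint (τ : ℝ) (c : ℂ) : ℂ :=
  ∫ x in (0:ℝ)..τ, ((gdd (x / τ) / τ ^ 2 : ℝ) : ℂ) * Complex.exp (c * x)

@[fun_prop] lemma gd_continuous : Continuous gd := by unfold gd; fun_prop
@[fun_prop] lemma gdd_continuous : Continuous gdd := by unfold gdd; fun_prop

@[fun_prop] lemma gcube_continuous' : Continuous gcube := gcube_continuous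

lemma hasDerivAt_gcube (t : ℝ) : HasDerivAt gcube (gd t) t := by
  have h := ((hasDerivAt_pow 3 t).const_mul (-2 : ℝ)).add
    ((hasDerivAt_pow 2 t).const_mul (3 : ℝ))
  unfold gcube gd
  convert h using 1
  norm_num
  · exact rfl
  · exact rfl
  · funext x; rfl
  · norm_num
    ring

lemma hasDerivAt_gd (t : ℝ) : HasDerivAt gd (gdd t) t := by
  have h := (((hasDerivAt_id t).const_mul (6 : ℝ)).sub
    ((hasDerivAt_pow 2 t).const_mul (6 : ℝ)))
  unfold gd gdd
  convert h using 1
  norm_num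
  · exact rfl
  · exact rfl
  · funext x; rfl
  · norm_num
    ring

variable {τ : ℝ} {c : ℂ}

lemma hasDerivAt_gcube_div (hτ : τ ≠ 0) (x : ℝ) :
    HasDerivAt (fun y : ℝ => gcube (y / τ)) (gd (x / τ) / τ) x := by
  have h := (hasDerivAt_gcube (x / τ)).comp x ((hasDerivAt_id x).div_const τ)
  simpa [mul_one_div, div_eq_mul_inv, Function.comp_def] using h

lemma hasDerivAt_gd_div (hτ : τ ≠ 0) (x : ℝ) :
    HasDerivAt (fun y : ℝ => gd (y / τ) / τ) (gdd (x / τ) / τ ^ 2) x := by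
  have h := ((hasDerivAt_gd (x / τ)).comp x ((hasDerivAt_id x).div_const τ)).div_const τ
  have h2 : gdd (x / τ) / τ ^ 2 = gdd (x / τ) * (1 / τ) / τ := by ring
  rw [h2]
  exact h

lemma hasDerivAt_expc (hc : c ≠ 0) (x : ℝ) :
    HasDerivAt (fun y : ℝ => Complex.exp (c * y) / c) (Complex.exp (c * x)) x := by
  have h1 : HasDerivAt (fun z : ℂ => Complex.exp (c * z) / c) (Complex.exp (c * x)) (x : ℂ) := by
    have h := ((Complex.hasDerivAt_exp (c * (x:ℂ))).comp (x : ℂ)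
      ((hasDerivAt_id (x : ℂ)).const_mul c)).div_const c
    convert h using 1
    · exact rfl
    · exact rfl
    · funext z; rfl
    · field_simp
  exact h1.comp_ofReal

lemma expc_norm (hre : c.re = 0) (x : ℝ) : ‖Complex.exp (c * (x:ℝ))‖ = 1 := by
  rw [Complex.norm_exp]
  simp [Complex.mul_re, hre]

lemma Rint_eq (hτ : 0 < τ) (hc : c ≠ 0) :
    Rint τ c = Complex.exp (c * τ) / c - (1 / c) * Jint τ c := by
  have hτ' : τ ≠ 0 := hτ.ne'
  have h := intervalIntegral.integral_mul_deriv_eq_deriv_mul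
    (u := fun x : ℝ => ((gcube (x / τ) : ℝ) : ℂ))
    (v := fun x : ℝ => Complex.exp (c * x) / c)
    (u' := fun x : ℝ => ((gd (x / τ) / τ : ℝ) : ℂ))
    (v' := fun x : ℝ => Complex.exp (c * x))
    (a := (0:ℝ)) (b := τ)
    (fun x _ => (hasDerivAt_gcube_div hτ' x).ofReal_comp)
    (fun x _ => hasDerivAt_expc hc x)
    (by apply Continuous.intervalIntegrable; fun_prop (disch := assumption))
    (by apply Continuous.intervalIntegrable; fun_prop)
  beta_reduce at h
  rw [Rint, h]
  rw [show τ / τ = 1 by field_simp, gcube_one, show (0:ℝ) / τ = 0 by simp, gcube_zero,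
    Complex.ofReal_one, Complex.ofReal_zero]
  rw [show (∫ x in (0:ℝ)..τ, ((gd (x / τ) / τ : ℝ) : ℂ) * (Complex.exp (c * x) / c))
      = ∫ x in (0:ℝ)..τ, (1 / c) * (((gd (x / τ) / τ : ℝ) : ℂ) * Complex.exp (c * x)) by
    congr 1; funext x; ring]
  rw [intervalIntegral.integral_const_mul]
  rw [← Jint]
  ring

lemma Jint_eq (hτ : 0 < τ) (hc : c ≠ 0) : Jint τ c = -(1 / c) * Kint τ c := by
  have hτ' : τ ≠ 0 := hτ.ne'
  have h := intervalIntegral.integral_mul_deriv_eq_deriv_mul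
    (u := fun x : ℝ => ((gd (x / τ) / τ : ℝ) : ℂ))
    (v := fun x : ℝ => Complex.exp (c * x) / c)
    (u' := fun x : ℝ => ((gdd (x / τ) / τ ^ 2 : ℝ) : ℂ))
    (v' := fun x : ℝ => Complex.exp (c * x))
    (a := (0:ℝ)) (b := τ)
    (fun x _ => (hasDerivAt_gd_div hτ' x).ofReal_comp)
    (fun x _ => hasDerivAt_expc hc x)
    (by apply Continuous.intervalIntegrable; fun_prop (disch := assumption))
    (by apply Continuous.intervalIntegrable; fun_prop)
  beta_reduce at h
  rw [Jint, h]
  rw [show τ / τ = 1 by field_simp, show (0:ℝ) / τ = 0 by simp]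
  rw [show gd 1 = 0 by norm_num [gd], show gd 0 = 0 by norm_num [gd], zero_div,
    Complex.ofReal_zero]
  rw [show (∫ x in (0:ℝ)..τ, ((gdd (x / τ) / τ ^ 2 : ℝ) : ℂ) * (Complex.exp (c * x) / c))
      = ∫ x in (0:ℝ)..τ, (1 / c) * (((gdd (x / τ) / τ ^ 2 : ℝ) : ℂ) * Complex.exp (c * x)) by
    congr 1; funext x; ring]
  rw [intervalIntegral.integral_const_mul]
  rw [← Kint]
  ring

lemma Jint_bound (hτ : 0 < τ) (hre : c.re = 0) : ‖Jint τ c‖ ≤ 1 := by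
  have hτ' : τ ≠ 0 := hτ.ne'
  have h1 : ‖Jint τ c‖
      ≤ ∫ x in (0:ℝ)..τ, ‖((gd (x / τ) / τ : ℝ) : ℂ) * Complex.exp (c * x)‖ := by
    exact intervalIntegral.norm_integral_le_integral_norm hτ.le
  have h2 : (∫ x in (0:ℝ)..τ, ‖((gd (x / τ) / τ : ℝ) : ℂ) * Complex.exp (c * x)‖)
      = ∫ x in (0:ℝ)..τ, gd (x / τ) / τ := by
    apply intervalIntegral.integral_congr
    intro x hx
    rw [Set.uIcc_of_le hτ.le] at hx
    have hu0 : 0 ≤ x / τ := div_nonneg hx.1 hτ.le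
    have hu1 : x / τ ≤ 1 := by rw [div_le_one hτ]; exact hx.2
    have hgd : 0 ≤ gd (x / τ) := by unfold gd; nlinarith
    show ‖((gd (x / τ) / τ : ℝ) : ℂ) * Complex.exp (c * (x:ℝ))‖ = gd (x / τ) / τ
    rw [norm_mul, Complex.norm_real, expc_norm hre]
    rw [Real.norm_eq_abs, abs_of_nonneg (div_nonneg hgd hτ.le), mul_one]
  have h3 : (∫ x in (0:ℝ)..τ, gd (x / τ) / τ) = 1 := by
    rw [intervalIntegral.integral_eq_sub_of_hasDerivAt
      (f := fun x : ℝ => gcube (x / τ)) (fun x _ => hasDerivAt_gcube_div hτ' x)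
      (by apply Continuous.intervalIntegrable; fun_prop (disch := assumption))]
    rw [show τ / τ = 1 by field_simp, show (0:ℝ) / τ = 0 by simp, gcube_one, gcube_zero]
    ring
  rw [h2, h3] at h1
  exact h1

lemma Kint_bound (hτ : 0 < τ) (hre : c.re = 0) : ‖Kint τ c‖ ≤ 3 / τ := by
  have hτ' : τ ≠ 0 := hτ.ne'
  have h1 : ‖Kint τ c‖
      ≤ ∫ x in (0:ℝ)..τ, ‖((gdd (x / τ) / τ ^ 2 : ℝ) : ℂ) * Complex.exp (c * x)‖ := by
    exact intervalIntegral.norm_integral_le_integral_norm hτ.le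
  have h2 : (∫ x in (0:ℝ)..τ, ‖((gdd (x / τ) / τ ^ 2 : ℝ) : ℂ) * Complex.exp (c * x)‖)
      = ∫ x in (0:ℝ)..τ, |gdd (x / τ)| / τ ^ 2 := by
    apply intervalIntegral.integral_congr
    intro x hx
    show ‖((gdd (x / τ) / τ ^ 2 : ℝ) : ℂ) * Complex.exp (c * (x:ℝ))‖ = |gdd (x / τ)| / τ ^ 2
    rw [norm_mul, Complex.norm_real, expc_norm hre]
    rw [Real.norm_eq_abs, mul_one, abs_div, abs_of_nonneg (by positivity : (0:ℝ) ≤ τ ^ 2)]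
  have hsplit : (∫ x in (0:ℝ)..τ, |gdd (x / τ)| / τ ^ 2)
      = (∫ x in (0:ℝ)..(τ/2), |gdd (x / τ)| / τ ^ 2)
        + ∫ x in (τ/2)..τ, |gdd (x / τ)| / τ ^ 2 := by
    rw [intervalIntegral.integral_add_adjacent_intervals]
    · apply Continuous.intervalIntegrable
      apply Continuous.div_const
      exact (gdd_continuous.comp (by fun_prop (disch := assumption))).abs
    · apply Continuous.intervalIntegrable
      apply Continuous.div_const
      exact (gdd_continuous.comp (by fun_prop (disch := assumption))).abs
  have hA : (∫ x in (0:ℝ)..(τ/2), |gdd (x / τ)| / τ ^ 2) = 3 / (2 * τ) := by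
    have hcg : (∫ x in (0:ℝ)..(τ/2), |gdd (x / τ)| / τ ^ 2)
        = ∫ x in (0:ℝ)..(τ/2), gdd (x / τ) / τ ^ 2 := by
      apply intervalIntegral.integral_congr
      intro x hx
      rw [Set.uIcc_of_le (by linarith : (0:ℝ) ≤ τ/2)] at hx
      have : x / τ ≤ 1/2 := by rw [div_le_iff₀ hτ]; linarith [hx.2]
      show |gdd (x / τ)| / τ ^ 2 = gdd (x / τ) / τ ^ 2
      rw [abs_of_nonneg (by unfold gdd; linarith)]
    rw [hcg, intervalIntegral.integral_eq_sub_of_hasDerivAt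
      (f := fun x : ℝ => gd (x / τ) / τ) (fun x _ => hasDerivAt_gd_div hτ' x)
      (by apply Continuous.intervalIntegrable; apply Continuous.div_const
          exact gdd_continuous.comp (by fun_prop (disch := assumption)))]
    rw [show τ / 2 / τ = 1/2 by field_simp, show (0:ℝ) / τ = 0 by simp]
    rw [show gd (1/2) = 3/2 by norm_num [gd], show gd 0 = 0 by norm_num [gd]]
    field_simp
    norm_num
  have hB : (∫ x in (τ/2)..τ, |gdd (x / τ)| / τ ^ 2) = 3 / (2 * τ) := by
    have hcg : (∫ x in (τ/2)..τ, |gdd (x / τ)| / τ ^ 2)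
        = ∫ x in (τ/2)..τ, -(gdd (x / τ) / τ ^ 2) := by
      apply intervalIntegral.integral_congr
      intro x hx
      rw [Set.uIcc_of_le (by linarith : τ/2 ≤ τ)] at hx
      have : 1/2 ≤ x / τ := by rw [le_div_iff₀ hτ]; linarith [hx.1]
      show |gdd (x / τ)| / τ ^ 2 = -(gdd (x / τ) / τ ^ 2)
      rw [abs_of_nonpos (by unfold gdd; linarith), neg_div]
    rw [hcg, intervalIntegral.integral_eq_sub_of_hasDerivAt
      (f := fun x : ℝ => -(gd (x / τ) / τ))
      (f' := fun x : ℝ => -(gdd (x / τ) / τ ^ 2))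
      (fun x _ => (hasDerivAt_gd_div hτ' x).neg)
      (by apply Continuous.intervalIntegrable; apply Continuous.neg; apply Continuous.div_const
          exact gdd_continuous.comp (by fun_prop (disch := assumption)))]
    rw [show τ / 2 / τ = 1/2 by field_simp, show τ / τ = 1 by field_simp]
    rw [show gd (1/2) = 3/2 by norm_num [gd], show gd 1 = 0 by norm_num [gd]]
    field_simp
    norm_num
  have h4 : (∫ x in (0:ℝ)..τ, |gdd (x / τ)| / τ ^ 2) = 3 / τ := by
    rw [hsplit, hA, hB]; field_simp; ring
  rw [h2, h4] at h1
  exact h1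

end calculus
section Feq

variable {α β τ : ℝ} {c : ℂ}

lemma F_eq (hτ : 0 < τ) (hab : α ≤ β) (hc : c ≠ 0) :
    (∫ x in (α - τ)..(β + τ), (hfun α β τ x : ℂ) * Complex.exp (c * x))
      = (1 / c) * (Complex.exp (c * ((β + τ : ℝ) : ℂ)) * Jint τ (-c)
          - Complex.exp (c * ((α - τ : ℝ) : ℂ)) * Jint τ c) := by
  have hτ' : τ ≠ 0 := hτ.ne'
  set G : ℝ → ℂ := fun x => (hfun α β τ x : ℂ) * Complex.exp (c * x) with hG
  have hcont : Continuous G :=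
    (Complex.continuous_ofReal.comp (hfun_continuous hτ hab)).mul (by fun_prop)
  have hs1 : (∫ x in (α - τ)..α, G x) + (∫ x in α..β, G x) = ∫ x in (α - τ)..β, G x :=
    intervalIntegral.integral_add_adjacent_intervals
      (hcont.intervalIntegrable _ _) (hcont.intervalIntegrable _ _)
  have hs2 : (∫ x in (α - τ)..β, G x) + (∫ x in β..(β + τ), G x)
      = ∫ x in (α - τ)..(β + τ), G x :=
    intervalIntegral.integral_add_adjacent_intervals
      (hcont.intervalIntegrable _ _) (hcont.intervalIntegrable _ _)
  have hI1 : (∫ x in (α - τ)..α, G x)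
      = ∫ x in (α - τ)..α, (gcube ((x - α + τ) / τ) : ℂ) * Complex.exp (c * x) := by
    apply intervalIntegral.integral_congr
    intro x hx
    rw [Set.uIcc_of_le (by linarith)] at hx
    show (hfun α β τ x : ℂ) * Complex.exp (c * x) = _
    rw [hfun_eq_rise hτ hx.1 hx.2]
  have hI2 : (∫ x in α..β, G x) = ∫ x in α..β, Complex.exp (c * x) := by
    apply intervalIntegral.integral_congr
    intro x hx
    rw [Set.uIcc_of_le hab] at hx
    show (hfun α β τ x : ℂ) * Complex.exp (c * x) = _
    rw [hfun_eq_one hτ hx.1 hx.2]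
    simp
  have hI3 : (∫ x in β..(β + τ), G x)
      = ∫ x in β..(β + τ), (gcube ((β + τ - x) / τ) : ℂ) * Complex.exp (c * x) := by
    apply intervalIntegral.integral_congr
    intro x hx
    rw [Set.uIcc_of_le (by linarith)] at hx
    show (hfun α β τ x : ℂ) * Complex.exp (c * x) = _
    rw [hfun_eq_fall hτ hab hx.1 hx.2]
  have hT1 : (∫ x in (α - τ)..α, (gcube ((x - α + τ) / τ) : ℂ) * Complex.exp (c * x))
      = Complex.exp (c * ((α - τ : ℝ) : ℂ)) * Rint τ c := by
    have step : (∫ x in (α - τ)..α, (gcube ((x - α + τ) / τ) : ℂ) * Complex.exp (c * x))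
        = ∫ x in (α - τ)..α,
            (fun y : ℝ => (gcube (y / τ) : ℂ) *
              Complex.exp (c * ((y + (α - τ) : ℝ) : ℂ))) (x - (α - τ)) := by
      apply intervalIntegral.integral_congr
      intro x hx
      show _ = (gcube ((x - (α - τ)) / τ) : ℂ) *
          Complex.exp (c * (((x - (α - τ)) + (α - τ) : ℝ) : ℂ))
      rw [show (x - (α - τ)) + (α - τ) = x by ring, show x - (α - τ) = x - α + τ by ring]
    rw [step, intervalIntegral.integral_comp_sub_right
      (fun y : ℝ => (gcube (y / τ) : ℂ) * Complex.exp (c * ((y + (α - τ) : ℝ) : ℂ))) (α - τ)]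
    rw [show α - τ - (α - τ) = (0:ℝ) by ring, show α - (α - τ) = τ by ring]
    have e2 : ∀ x : ℝ, (gcube (x / τ) : ℂ) * Complex.exp (c * ((x + (α - τ) : ℝ) : ℂ))
        = Complex.exp (c * ((α - τ : ℝ) : ℂ)) * ((gcube (x / τ) : ℂ) * Complex.exp (c * x)) := by
      intro x
      rw [show (c * ((x + (α - τ) : ℝ) : ℂ)) = c * x + c * ((α - τ : ℝ) : ℂ) by push_cast; ring,
        Complex.exp_add]
      ring
    simp_rw [e2]
    rw [intervalIntegral.integral_const_mul, ← Rint]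
  have hT3 : (∫ x in β..(β + τ), (gcube ((β + τ - x) / τ) : ℂ) * Complex.exp (c * x))
      = Complex.exp (c * ((β + τ : ℝ) : ℂ)) * Rint τ (-c) := by
    have step : (∫ x in β..(β + τ), (gcube ((β + τ - x) / τ) : ℂ) * Complex.exp (c * x))
        = ∫ x in β..(β + τ),
            (fun y : ℝ => (gcube (y / τ) : ℂ) *
              Complex.exp (c * (((β + τ) - y : ℝ) : ℂ))) ((β + τ) - x) := by
      apply intervalIntegral.integral_congr
      intro x hx
      show _ = (gcube (((β + τ) - x) / τ) : ℂ) *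
          Complex.exp (c * (((β + τ) - ((β + τ) - x) : ℝ) : ℂ))
      rw [show (β + τ) - ((β + τ) - x) = x by ring, show (β + τ) - x = β + τ - x by ring]
    rw [step, intervalIntegral.integral_comp_sub_left
      (fun y : ℝ => (gcube (y / τ) : ℂ) * Complex.exp (c * (((β + τ) - y : ℝ) : ℂ))) (β + τ)]
    rw [show β + τ - (β + τ) = (0:ℝ) by ring, show β + τ - β = τ by ring]
    have e2 : ∀ x : ℝ, (gcube (x / τ) : ℂ) * Complex.exp (c * (((β + τ) - x : ℝ) : ℂ))
        = Complex.exp (c * ((β + τ : ℝ) : ℂ)) *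
            ((gcube (x / τ) : ℂ) * Complex.exp (-c * x)) := by
      intro x
      rw [show (c * (((β + τ) - x : ℝ) : ℂ)) = -c * x + c * ((β + τ : ℝ) : ℂ) by push_cast; ring,
        Complex.exp_add]
      ring
    simp_rw [e2]
    rw [intervalIntegral.integral_const_mul, ← Rint]
  have hmid : (∫ x in α..β, Complex.exp (c * x))
      = (Complex.exp (c * β) - Complex.exp (c * α)) / c := integral_exp_mul_complex hc
  rw [← hs2, ← hs1, hI1, hI2, hI3, hT1, hT3, hmid,
    Rint_eq hτ hc, Rint_eq hτ (neg_ne_zero.2 hc)]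
  have m1 : Complex.exp (c * ((α - τ : ℝ) : ℂ)) * Complex.exp (c * (τ : ℂ))
      = Complex.exp (c * ((α : ℝ) : ℂ)) := by
    rw [← Complex.exp_add]; congr 1; push_cast; ring
  have m2 : Complex.exp (c * ((β + τ : ℝ) : ℂ)) * Complex.exp (-c * (τ : ℂ))
      = Complex.exp (c * ((β : ℝ) : ℂ)) := by
    rw [← Complex.exp_add]; congr 1; push_cast; ring
  set J1 := Jint τ c with hJ1
  set J2 := Jint τ (-c) with hJ2
  set E1 := Complex.exp (c * ((α - τ : ℝ) : ℂ)) with hE1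
  set E2 := Complex.exp (c * (τ : ℂ)) with hE2
  set E5 := Complex.exp (c * ((β + τ : ℝ) : ℂ)) with hE5
  set E6 := Complex.exp (-c * (τ : ℂ)) with hE6
  set E3 := Complex.exp (c * ((α : ℝ) : ℂ)) with hE3
  set E4 := Complex.exp (c * ((β : ℝ) : ℂ)) with hE4
  linear_combination m1 / c - m2 / c

lemma F_bound1 (hτ : 0 < τ) (hab : α ≤ β) (hc : c ≠ 0) (hre : c.re = 0) :
    ‖∫ x in (α - τ)..(β + τ), (hfun α β τ x : ℂ) * Complex.exp (c * x)‖
      ≤ 2 / ‖c‖ := by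
  rw [F_eq hτ hab hc, norm_mul]
  have hrc : (-c).re = 0 := by simp [hre]
  have h1 : ‖Complex.exp (c * ((β + τ : ℝ) : ℂ)) * Jint τ (-c)
      - Complex.exp (c * ((α - τ : ℝ) : ℂ)) * Jint τ c‖ ≤ 2 := by
    calc ‖_‖ ≤ ‖Complex.exp (c * ((β + τ : ℝ) : ℂ)) * Jint τ (-c)‖
        + ‖Complex.exp (c * ((α - τ : ℝ) : ℂ)) * Jint τ c‖ :=
      norm_sub_le _ _
    _ ≤ 1 + 1 := by
      rw [norm_mul, norm_mul]
      have e1 : ‖Complex.exp (c * ((β + τ : ℝ) : ℂ))‖ = 1 := by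
        exact expc_norm hre _
      have e2 : ‖Complex.exp (c * ((α - τ : ℝ) : ℂ))‖ = 1 := by
        exact expc_norm hre _
      rw [e1, e2, one_mul, one_mul]
      exact add_le_add (Jint_bound hτ hrc) (Jint_bound hτ hre)
    _ = 2 := by norm_num
  have h2 := mul_le_mul_of_nonneg_left h1 (norm_nonneg (1 / c))
  refine le_trans h2 (le_of_eq ?_)
  rw [norm_div, norm_one]
  ring

lemma F_bound2 (hτ : 0 < τ) (hab : α ≤ β) (hc : c ≠ 0) (hre : c.re = 0) :
    ‖∫ x in (α - τ)..(β + τ), (hfun α β τ x : ℂ) * Complex.exp (c * x)‖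
      ≤ 6 / (τ * ‖c‖ ^ 2) := by
  rw [F_eq hτ hab hc, norm_mul]
  have hrc : (-c).re = 0 := by simp [hre]
  have hcpos : 0 < ‖c‖ := norm_pos_iff.2 hc
  have hJ : ∀ d : ℂ, d ≠ 0 → d.re = 0 → ‖Jint τ d‖ ≤ 3 / (τ * ‖c‖) →
      True := fun _ _ _ _ => trivial
  have key : ∀ d : ℂ, d ≠ 0 → d.re = 0 → ‖d‖ = ‖c‖ →
      ‖Jint τ d‖ ≤ 3 / (τ * ‖c‖) := by
    intro d hd hdre hdabs
    rw [Jint_eq hτ hd, norm_mul, norm_neg, norm_div, norm_one]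
    have hstep := mul_le_mul_of_nonneg_left (Kint_bound hτ hdre)
      (by positivity : (0:ℝ) ≤ 1 / ‖d‖)
    refine le_trans hstep (le_of_eq ?_)
    rw [hdabs]
    field_simp
  have h1 : ‖Complex.exp (c * ((β + τ : ℝ) : ℂ)) * Jint τ (-c)
      - Complex.exp (c * ((α - τ : ℝ) : ℂ)) * Jint τ c‖ ≤ 6 / (τ * ‖c‖) := by
    calc ‖_‖ ≤ ‖Complex.exp (c * ((β + τ : ℝ) : ℂ)) * Jint τ (-c)‖
        + ‖Complex.exp (c * ((α - τ : ℝ) : ℂ)) * Jint τ c‖ :=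
      norm_sub_le _ _
    _ ≤ 3 / (τ * ‖c‖) + 3 / (τ * ‖c‖) := by
      rw [norm_mul, norm_mul]
      have e1 : ‖Complex.exp (c * ((β + τ : ℝ) : ℂ))‖ = 1 := by
        exact expc_norm hre _
      have e2 : ‖Complex.exp (c * ((α - τ : ℝ) : ℂ))‖ = 1 := by
        exact expc_norm hre _
      rw [e1, e2, one_mul, one_mul]
      exact add_le_add (key (-c) (neg_ne_zero.2 hc) hrc (norm_neg _))
        (key c hc hre rfl)
    _ = 6 / (τ * ‖c‖) := by ring
  have h2 := mul_le_mul_of_nonneg_left h1 (norm_nonneg (1 / c))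
  refine le_trans h2 (le_of_eq ?_)
  rw [norm_div, norm_one]
  field_simp

end Feq
section final

variable {α β τ : ℝ}

lemma fourierC_le_one (hτ : 0 < τ) (hab : α ≤ β) (hlen : β - α + 2 * τ < 2 * Real.pi) (a : ℤ) :
    ‖fourierC α β τ a‖ ≤ 1 := by
  have hπ := Real.pi_pos
  rw [fourierC_eq hτ hab hlen a, norm_mul]
  have h1 : ‖(1 : ℂ) / (2 * (Real.pi : ℂ))‖ = 1 / (2 * Real.pi) := by
    rw [norm_div, norm_one, show ((2 : ℂ) * (Real.pi : ℂ)) = ((2 * Real.pi : ℝ) : ℂ) by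
      push_cast; ring, Complex.norm_real, Real.norm_eq_abs, abs_of_pos (by positivity)]
  have h2 : ‖∫ x in (α - τ)..(β + τ),
      (hfun α β τ x : ℂ) * Complex.exp (-Complex.I * a * x)‖ ≤ 1 * |(β + τ) - (α - τ)| := by
    apply intervalIntegral.norm_integral_le_of_norm_le_const
    intro x hx
    rw [norm_mul, Complex.norm_real, Real.norm_eq_abs,
      abs_of_nonneg (hfun_nonneg hτ (x := x)),
      expc_norm (c := -Complex.I * a) (by simp) x, mul_one]
    exact hfun_le_one hτ
  rw [h1]
  have h3 : |(β + τ) - (α - τ)| = β - α + 2 * τ := by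
    rw [abs_of_nonneg (by linarith)]; ring
  rw [h3, one_mul] at h2
  have h4 : 1 / (2 * Real.pi) * ‖∫ x in (α - τ)..(β + τ),
      (hfun α β τ x : ℂ) * Complex.exp (-Complex.I * a * x)‖
      ≤ 1 / (2 * Real.pi) * (β - α + 2 * τ) :=
    mul_le_mul_of_nonneg_left h2 (by positivity)
  refine le_trans h4 ?_
  rw [div_mul_eq_mul_div, one_mul, div_le_one (by positivity)]
  linarith

lemma fourierC_pos_bound (hτ : 0 < τ) (hab : α ≤ β) (hlen : β - α + 2 * τ < 2 * Real.pi)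
    (n : ℕ) (hn : 1 ≤ n) :
    ‖fourierC α β τ (n : ℤ)‖ ≤ 1 / (Real.pi * n) ∧
      ‖fourierC α β τ (n : ℤ)‖ ≤ 3 / (Real.pi * τ * (n : ℝ) ^ 2) := by
  have hπ := Real.pi_pos
  have hn1 : (1 : ℝ) ≤ (n : ℝ) := by exact_mod_cast hn
  rw [fourierC_eq hτ hab hlen (n : ℤ), norm_mul]
  have h1 : ‖(1 : ℂ) / (2 * (Real.pi : ℂ))‖ = 1 / (2 * Real.pi) := by
    rw [norm_div, norm_one, show ((2 : ℂ) * (Real.pi : ℂ)) = ((2 * Real.pi : ℝ) : ℂ) by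
      push_cast; ring, Complex.norm_real, Real.norm_eq_abs, abs_of_pos (by positivity)]
  rw [h1]
  set c : ℂ := -Complex.I * ((n : ℤ) : ℂ) with hc0
  have habs : ‖c‖ = (n : ℝ) := by
    rw [hc0, norm_mul]
    simp [Complex.norm_intCast]
  have hcne : c ≠ 0 := by
    intro h
    rw [h, norm_zero] at habs
    linarith
  have hcre : c.re = 0 := by simp [hc0]
  have b1 := F_bound1 hτ hab hcne hcre
  have b2 := F_bound2 hτ hab hcne hcre
  rw [habs] at b1 b2
  constructor
  · refine le_trans (mul_le_mul_of_nonneg_left b1 (by positivity)) (le_of_eq ?_)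
    field_simp
  · refine le_trans (mul_le_mul_of_nonneg_left b2 (by positivity)) (le_of_eq ?_)
    field_simp
    ring

end final
/-- With `τ = 1/q` for an integer `q ≥ 1`, the nonnegative Fourier coefficients of
`h_{α,β,τ}` satisfy `∑_{a=0}^∞ |c_a| ≤ (1/π)(9 + log q)`. -/
theorem fourier_coeff_sum_bound (q : ℕ) (hq : 1 ≤ q) (τ : ℝ) (hτ : τ = 1 / (q : ℝ))
    (α β : ℝ) (hab : α ≤ β) (hlen : β - α + 2 * τ < 2 * Real.pi) :
    ∑' a : ℕ, ‖fourierC α β τ (a : ℤ)‖ ≤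
      (1 / Real.pi) * (9 + Real.log (q : ℝ)) := by
  have hπ := Real.pi_pos
  have hq0 : (0:ℝ) < (q:ℝ) := by exact_mod_cast hq
  have hτpos : 0 < τ := by rw [hτ]; positivity
  set m : ℕ → ℝ := fun a =>
    if a = 0 then 1 else if a ≤ q then 1 / (Real.pi * a) else 3 * q / (Real.pi * (a:ℝ) ^ 2)
    with hm
  have hm_nonneg : ∀ a, 0 ≤ m a := by
    intro a
    rw [hm]
    dsimp only
    split_ifs with h1 h2
    · norm_num
    · positivity
    · positivity
  have hmaj : ∀ a : ℕ, ‖fourierC α β τ (a : ℤ)‖ ≤ m a := by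
    intro a
    rcases Nat.eq_zero_or_pos a with h0 | h1
    · rw [hm]; dsimp only; rw [h0, if_pos rfl]
      exact fourierC_le_one hτpos hab hlen _
    · have hb := fourierC_pos_bound hτpos hab hlen a h1
      rw [hm]; dsimp only; rw [if_neg (by omega)]
      by_cases hle : a ≤ q
      · rw [if_pos hle]; exact hb.1
      · rw [if_neg hle]
        refine le_trans hb.2 (le_of_eq ?_)
        rw [hτ]
        have ha1 : (1:ℝ) ≤ (a:ℝ) := by exact_mod_cast h1
        field_simp
  have hM : ∀ a : ℕ, m a ≤ (3*(q:ℝ)/Real.pi) * ((1:ℝ)/(a:ℝ)^2) + (if a = 0 then (1:ℝ) else 0) := by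
    intro a
    rcases Nat.eq_zero_or_pos a with h0 | h1
    · subst h0; rw [hm]; norm_num
    · have ha1 : (1:ℝ) ≤ (a:ℝ) := by exact_mod_cast h1
      have hq1 : (1:ℝ) ≤ (q:ℝ) := by exact_mod_cast hq
      rw [hm]; dsimp only
      simp only [if_neg (show ¬ a = 0 by omega), add_zero]
      have e : (3*(q:ℝ)/Real.pi) * ((1:ℝ)/(a:ℝ)^2) = 3*(q:ℝ) / (Real.pi * (a:ℝ)^2) := by
        rw [div_mul_div_comm, mul_one]
      rw [e]
      by_cases hle : a ≤ q
      · rw [if_pos hle]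
        have haq : (a:ℝ) ≤ (q:ℝ) := by exact_mod_cast hle
        rw [div_le_div_iff₀ (by positivity) (by positivity)]
        have h2 : (a:ℝ)*(a:ℝ) ≤ (q:ℝ)*(a:ℝ) := mul_le_mul_of_nonneg_right haq (by linarith)
        nlinarith [mul_le_mul_of_nonneg_left h2 hπ.le]
      · rw [if_neg hle]
  have hsum1 : Summable (fun a : ℕ => (3*(q:ℝ)/Real.pi) * ((1:ℝ)/(a:ℝ)^2)) :=
    (Real.summable_one_div_nat_pow.2 (by norm_num)).mul_left _
  have hsum2 : Summable (fun a : ℕ => if a = 0 then (1:ℝ) else 0) := by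
    apply summable_of_ne_finset_zero (s := {0})
    intro a ha
    simp only [Finset.mem_singleton] at ha
    simp [ha]
  have hm_summable : Summable m :=
    Summable.of_nonneg_of_le hm_nonneg hM (hsum1.add hsum2)
  have habs_summable : Summable (fun a : ℕ => ‖fourierC α β τ (a : ℤ)‖) :=
    Summable.of_nonneg_of_le (fun a => norm_nonneg _) hmaj hm_summable
  have hstep1 : ∑' a : ℕ, ‖fourierC α β τ (a : ℤ)‖ ≤ ∑' a, m a :=
    Summable.tsum_le_tsum hmaj habs_summable hm_summable
  have hshift : Summable (fun a : ℕ => m (a + 1)) := by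
    rw [summable_nat_add_iff]; exact hm_summable
  have hsplit0 : ∑' a, m a = m 0 + ∑' a, m (a + 1) := Summable.tsum_eq_zero_add hm_summable
  have hsplitq : ∑ i ∈ Finset.range q, m (i + 1) + ∑' i : ℕ, m (i + q + 1)
      = ∑' a : ℕ, m (a + 1) := by
    exact Summable.sum_add_tsum_nat_add q hshift
  have hS1 : ∑ i ∈ Finset.range q, m (i + 1) ≤ (1/Real.pi) * (1 + Real.log q) := by
    have e1 : ∀ i ∈ Finset.range q, m (i + 1) = (1/Real.pi) * (1/((i:ℝ)+1)) := by
      intro i hi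
      rw [Finset.mem_range] at hi
      rw [hm]; dsimp only
      rw [if_neg (by omega), if_pos (by omega)]
      push_cast
      rw [one_div_mul_one_div]
    rw [Finset.sum_congr rfl e1, ← Finset.mul_sum]
    have hhar : ∑ i ∈ Finset.range q, (1/((i:ℝ)+1)) = ((harmonic q : ℚ) : ℝ) := by
      rw [harmonic]
      push_cast
      apply Finset.sum_congr rfl
      intro i _
      rw [one_div]
    rw [hhar]
    exact mul_le_mul_of_nonneg_left (harmonic_le_one_add_log q) (by positivity)
  have hS2 : ∑' i : ℕ, m (i + q + 1) ≤ 3 / Real.pi := by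
    apply Real.tsum_le_of_sum_range_le (fun i => hm_nonneg _)
    intro N
    have hterm : ∀ i ∈ Finset.range N, m (i + q + 1)
        ≤ (3*(q:ℝ)/Real.pi) * (1/((i:ℝ)+q) - 1/((i:ℝ)+q+1)) := by
      intro i _
      rw [hm]; dsimp only
      rw [if_neg (by omega), if_neg (by omega)]
      have hq1 : (1:ℝ) ≤ (q:ℝ) := by exact_mod_cast hq
      have hi0 : (0:ℝ) ≤ (i:ℝ) := by positivity
      have e : 1/((i:ℝ)+q) - 1/((i:ℝ)+q+1) = 1/(((i:ℝ)+q)*((i:ℝ)+q+1)) := by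
        rw [div_sub_div _ _ (by positivity) (by positivity)]
        congr 1
        ring
      rw [e, show (3*(q:ℝ)/Real.pi) * ((1:ℝ)/(((i:ℝ)+q)*((i:ℝ)+q+1)))
        = 3*(q:ℝ) / (Real.pi * (((i:ℝ)+q)*((i:ℝ)+q+1))) by rw [div_mul_div_comm, mul_one]]
      push_cast
      rw [div_le_div_iff₀ (by positivity) (by positivity)]
      have hx : ((i:ℝ)+q)*((i:ℝ)+q+1) ≤ ((i:ℝ)+q+1)^2 := by nlinarith
      have h3 : Real.pi * (((i:ℝ)+q)*((i:ℝ)+q+1)) ≤ Real.pi * (((i:ℝ)+q+1)^2) :=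
        mul_le_mul_of_nonneg_left hx hπ.le
      nlinarith [mul_le_mul_of_nonneg_left h3 (by positivity : (0:ℝ) ≤ 3*(q:ℝ))]
    refine le_trans (Finset.sum_le_sum hterm) ?_
    rw [← Finset.mul_sum]
    have htel : ∑ i ∈ Finset.range N, (1/((i:ℝ)+q) - 1/((i:ℝ)+q+1))
        = 1/(q:ℝ) - 1/((N:ℝ)+q) := by
      have e2 : ∀ i ∈ Finset.range N, (1/((i:ℝ)+q) - 1/((i:ℝ)+q+1))
          = (fun j : ℕ => 1/((j:ℝ)+q)) i - (fun j : ℕ => 1/((j:ℝ)+q)) (i+1) := by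
        intro i _
        dsimp only
        push_cast
        ring_nf
      rw [Finset.sum_congr rfl e2, Finset.sum_range_sub' (f := fun j : ℕ => 1/((j:ℝ)+q))]
      norm_num
    rw [htel]
    have hb : (3*(q:ℝ)/Real.pi) * (1/(q:ℝ) - 1/((N:ℝ)+q)) ≤ (3*(q:ℝ)/Real.pi) * (1/(q:ℝ)) := by
      apply mul_le_mul_of_nonneg_left _ (by positivity)
      have : 0 ≤ 1/((N:ℝ)+q) := by positivity
      linarith
    refine le_trans hb (le_of_eq ?_)
    field_simp
  have hm0 : m 0 = 1 := by rw [hm]; norm_num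
  have hfinal : ∑' a, m a ≤ 1 + ((1/Real.pi) * (1 + Real.log q) + 3 / Real.pi) := by
    rw [hsplit0, hm0, ← hsplitq]
    have := add_le_add hS1 hS2
    linarith
  refine le_trans hstep1 (le_trans hfinal ?_)
  have hlog : 0 ≤ Real.log q := Real.log_nonneg (by exact_mod_cast hq)
  have hπ4 : Real.pi ≤ 4 := Real.pi_le_four
  rw [← sub_nonneg]
  have key : (1 / Real.pi) * (9 + Real.log (q:ℝ))
        - (1 + ((1/Real.pi) * (1 + Real.log (q:ℝ)) + 3 / Real.pi))
      = (1/Real.pi) * (5 - Real.pi) := by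
    field_simp
    ring
  rw [key]
  apply mul_nonneg (by positivity)
  linarith
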